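/- arXiv:1010.3909 — 5 statements merged into one kernel-verified Lean document; each statement's English description precedes it below -/
import Mathlib

section
/- Let d ≥ 1, let A : ℝ → Matrix (Fin d) (Fin d) ℝ be continuous with A(t) lower triangular (Aᵢⱼ(t) = 0 for j > i) and with unit diagonal (Aᵢᵢ(t) = 1) for all t, and let ξ : ℝ → Fin d → ℝ be differentiable with ξᵢ'(t) = Σ_{j ≤ i} Aᵢⱼ(t)·ξⱼ(t) for all i and t, and with ξ₀(0) ≠ 0 (components indexed from 0). Then ξ₀(t) = ξ₀(0)·exp(t) for all t, and for every index i ≥ 1 and all t, ξᵢ(t) = ξ₀(t)·( ξᵢ(0)/ξ₀(0) + ∫₀ᵗ Σ_{j < i} Aᵢⱼ(s)·ξⱼ(s)/ξ₀(s) ds ). Hence every component of ξ is obtained from the entries of A by iterated quadratures (integrals and exponentials of integrals). -/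
/-- Unit lower triangular Piccard-Vessiot systems are solved by iterated quadratures. -/
theorem stmt_4 (d : ℕ) (hd : 0 < d) (A : ℝ → Matrix (Fin d) (Fin d) ℝ)
    (hA : Continuous A)
    (hlow : ∀ t (i j : Fin d), i < j → A t i j = 0)
    (hdiag : ∀ t (i : Fin d), A t i i = 1)
    (ξ : ℝ → Fin d → ℝ)
    (hξ : ∀ i : Fin d, Differentiable ℝ (fun t => ξ t i))
    (hode : ∀ (i : Fin d) (t : ℝ),
      deriv (fun t => ξ t i) t = ∑ j ∈ Finset.Iic i, A t i j * ξ t j)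
    (h0 : ξ 0 ⟨0, hd⟩ ≠ 0) :
    (∀ t, ξ t ⟨0, hd⟩ = ξ 0 ⟨0, hd⟩ * Real.exp t) ∧
    (∀ i : Fin d, 1 ≤ (i : ℕ) → ∀ t,
      ξ t i = ξ t ⟨0, hd⟩ *
        (ξ 0 i / ξ 0 ⟨0, hd⟩
          + ∫ s in (0:ℝ)..t, ∑ j ∈ Finset.Iio i, A s i j * ξ s j / ξ s ⟨0, hd⟩)) := by
  set i0 : Fin d := ⟨0, hd⟩ with hi0
  have hIic : Finset.Iic i0 = {i0} := by
    ext j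
    simp only [Finset.mem_Iic, Finset.mem_singleton, Fin.le_def, Fin.ext_iff, hi0, Fin.val_mk]
    omega
  have hd0 : ∀ t, deriv (fun t => ξ t i0) t = ξ t i0 := by
    intro t
    rw [hode, hIic, Finset.sum_singleton, hdiag, one_mul]
  -- derivative of exp(-t)
  have hexp : ∀ t : ℝ, HasDerivAt (fun t : ℝ => Real.exp (-t)) (-Real.exp (-t)) t := by
    intro t
    simpa [Function.comp_def] using ((Real.hasDerivAt_exp (-t)).comp t ((hasDerivAt_id t).neg))
  have hg0 : ∀ t, HasDerivAt (fun t => ξ t i0 * Real.exp (-t)) 0 t := by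
    intro t
    have h1 : HasDerivAt (fun t => ξ t i0) (ξ t i0) t := hd0 t ▸ ((hξ i0) t).hasDerivAt
    have := h1.mul (hexp t)
    exact this.congr_deriv (by ring)
  have hconst : ∀ t, ξ t i0 * Real.exp (-t) = ξ 0 i0 := by
    intro t
    have := is_const_of_deriv_eq_zero (f := fun t => ξ t i0 * Real.exp (-t))
      (fun t => ((hg0 t).differentiableAt)) (fun t => (hg0 t).deriv) t 0
    simpa using this
  have part1 : ∀ t, ξ t i0 = ξ 0 i0 * Real.exp t := by
    intro t
    have h := hconst t
    have : ξ t i0 * Real.exp (-t) * Real.exp t = ξ 0 i0 * Real.exp t := by rw [h]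
    rwa [mul_assoc, ← Real.exp_add, neg_add_cancel, Real.exp_zero, mul_one] at this
  refine ⟨part1, ?_⟩
  intro i hi t
  set c := ξ 0 i0 with hc
  -- ODE for component i
  have hmem : i0 < i := by
    simp only [Fin.lt_def, hi0]
    omega
  have hIic2 : Finset.Iic i = insert i (Finset.Iio i) := by
    ext j
    simp [Finset.mem_Iic, Finset.mem_Iio, le_iff_lt_or_eq, or_comm]
  set F : ℝ → ℝ := fun s => ∑ j ∈ Finset.Iio i, A s i j * ξ s j with hF
  have hdi : ∀ t, deriv (fun t => ξ t i) t = ξ t i + F t := by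
    intro t
    rw [hode, hIic2, Finset.sum_insert (by simp), hdiag, one_mul]
  have hFcont : Continuous F :=
    continuous_finset_sum _ fun j _ => (hA.matrix_elem i j).mul (hξ j).continuous
  -- g t = ξ t i * exp(-t) has derivative F t * exp(-t)
  have hg : ∀ s : ℝ, HasDerivAt (fun t => ξ t i * Real.exp (-t)) (F s * Real.exp (-s)) s := by
    intro s
    have h1 : HasDerivAt (fun t => ξ t i) (ξ s i + F s) s := hdi s ▸ ((hξ i) s).hasDerivAt
    have := h1.mul (hexp s)
    exact this.congr_deriv (by ring)
  have hint : IntervalIntegrable (fun s => F s * Real.exp (-s)) MeasureTheory.volume 0 t :=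
    (hFcont.mul (Real.continuous_exp.comp continuous_neg)).intervalIntegrable 0 t
  have hFTC : (∫ s in (0:ℝ)..t, F s * Real.exp (-s))
      = ξ t i * Real.exp (-t) - ξ 0 i * Real.exp (-(0:ℝ)) :=
    intervalIntegral.integral_eq_sub_of_hasDerivAt (fun s _ => hg s) hint
  -- rewrite the integrand
  have hintegrand : ∀ s : ℝ, (∑ j ∈ Finset.Iio i, A s i j * ξ s j / ξ s i0)
      = (F s * Real.exp (-s)) * c⁻¹ := by
    intro s
    rw [hF]
    rw [← Finset.sum_div, Finset.sum_mul, Finset.sum_mul, Finset.sum_div]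
    refine Finset.sum_congr rfl fun j _ => ?_
    rw [part1 s, Real.exp_neg, mul_comm c (Real.exp s), ← div_div,
      div_eq_mul_inv, div_eq_mul_inv]
  have hI : (∫ s in (0:ℝ)..t, ∑ j ∈ Finset.Iio i, A s i j * ξ s j / ξ s i0)
      = (ξ t i * Real.exp (-t) - ξ 0 i) * c⁻¹ := by
    rw [intervalIntegral.integral_congr (fun s _ => hintegrand s),
      intervalIntegral.integral_mul_const, hFTC]
    simp
  rw [hI, part1 t]
  rw [Real.exp_neg]
  field_simp
  ring
end

section
/- Let d ≥ 1, let A : ℝ → Matrix (Fin d) (Fin d) ℝ be continuous with A(t) lower triangular (Aᵢⱼ(t) = 0 for j > i) for all t, set cᵢ(t) = ∫₀ᵗ Aᵢᵢ(s) ds for each index i, and let ξ : ℝ → Fin d → ℝ be differentiable with ξᵢ'(t) = Σ_{j ≤ i} Aᵢⱼ(t)·ξⱼ(t) for all i and t, and with ξ₀(0) ≠ 0 (components indexed from 0). Then ξ₀(t) = ξ₀(0)·exp(c₀(t)) for all t, and for every index i ≥ 1 and all t, ξᵢ(t) = ξ₀(t)·exp(cᵢ(t) − c₀(t))·( ξᵢ(0)/ξ₀(0)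 + ∫₀ᵗ ( Σ_{j < i} Aᵢⱼ(s)·ξⱼ(s)/ξ₀(s) )·exp(c₀(s) − cᵢ(s)) ds ). Hence every component of ξ is obtained from the entries of A by iterated quadratures (integrals and exponentials of integrals). -/
/-- Lower triangular Piccard-Vessiot systems are solved by iterated quadratures. -/
theorem stmt_7 (d : ℕ) (hd : 0 < d) (A : ℝ → Matrix (Fin d) (Fin d) ℝ)
    (hA : Continuous A)
    (hlow : ∀ t (i j : Fin d), i < j → A t i j = 0)
    (c : Fin d → ℝ → ℝ)
    (hc : ∀ (i : Fin d) (t : ℝ), c i t = ∫ s in (0:ℝ)..t, A s i i)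
    (ξ : ℝ → Fin d → ℝ)
    (hξ : ∀ i : Fin d, Differentiable ℝ (fun t => ξ t i))
    (hode : ∀ (i : Fin d) (t : ℝ),
      deriv (fun t => ξ t i) t = ∑ j ∈ Finset.Iic i, A t i j * ξ t j)
    (h0 : ξ 0 ⟨0, hd⟩ ≠ 0) :
    (∀ t, ξ t ⟨0, hd⟩ = ξ 0 ⟨0, hd⟩ * Real.exp (c ⟨0, hd⟩ t)) ∧
    (∀ i : Fin d, 1 ≤ (i : ℕ) → ∀ t,
      ξ t i = ξ t ⟨0, hd⟩ * Real.exp (c i t - c ⟨0, hd⟩ t) *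
        (ξ 0 i / ξ 0 ⟨0, hd⟩
          + ∫ s in (0:ℝ)..t,
              (∑ j ∈ Finset.Iio i, A s i j * ξ s j / ξ s ⟨0, hd⟩)
                * Real.exp (c ⟨0, hd⟩ s - c i s))) := by
  set i0 : Fin d := ⟨0, hd⟩ with hi0def
  have hi0le : ∀ j : Fin d, i0 ≤ j := fun j => by
    simp [hi0def, Fin.le_def]
  -- continuity of entries and solutions
  have hcA : ∀ i j : Fin d, Continuous fun t => A t i j := fun i j =>
    (continuous_apply j).comp ((continuous_apply i).comp hA)
  have hcξ : ∀ j : Fin d, Continuous fun t => ξ t j := fun j => (hξ j).continuous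
  -- c i is differentiable with derivative A t i i
  have hcfun : ∀ i : Fin d, c i = fun t => ∫ s in (0:ℝ)..t, A s i i := fun i => funext (hc i)
  have hcderiv : ∀ (i : Fin d) (t : ℝ), HasDerivAt (c i) (A t i i) t := by
    intro i t
    rw [hcfun i]
    exact intervalIntegral.integral_hasDerivAt_right ((hcA i i).intervalIntegrable _ _)
      (hcA i i).aestronglyMeasurable.stronglyMeasurableAtFilter (hcA i i).continuousAt
  have hccont : ∀ i : Fin d, Continuous (c i) := fun i =>
    Differentiable.continuous (fun t => (hcderiv i t).differentiableAt)
  have hc0 : ∀ i : Fin d, c i 0 = 0 := fun i => by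
    rw [hc]; exact intervalIntegral.integral_same
  -- ODE as HasDerivAt
  have hξd : ∀ (i : Fin d) (t : ℝ),
      HasDerivAt (fun t => ξ t i) (∑ j ∈ Finset.Iic i, A t i j * ξ t j) t := fun i t =>
    hode i t ▸ ((hξ i).differentiableAt.hasDerivAt)
  -- splitting the sum
  have hsplit : ∀ (i : Fin d) (t : ℝ),
      ∑ j ∈ Finset.Iic i, A t i j * ξ t j
        = A t i i * ξ t i + ∑ j ∈ Finset.Iio i, A t i j * ξ t j := by
    intro i t
    rw [← Finset.Iio_insert, Finset.sum_insert (by simp)]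
  -- derivative of g i t = ξ t i * exp (-(c i t))
  have hgd : ∀ (i : Fin d) (t : ℝ),
      HasDerivAt (fun t => ξ t i * Real.exp (-(c i t)))
        ((∑ j ∈ Finset.Iio i, A t i j * ξ t j) * Real.exp (-(c i t))) t := by
    intro i t
    have hE : HasDerivAt (fun t => Real.exp (-(c i t)))
        (Real.exp (-(c i t)) * (-(A t i i))) t := ((hcderiv i t).neg).exp
    have := (hξd i t).mul hE
    exact this.congr_deriv (by rw [hsplit i t]; ring)
  -- Part 1
  have hIio0 : (Finset.Iio i0) = ∅ := by
    apply Finset.eq_empty_of_forall_notMem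
    intro j hj
    exact absurd (Finset.mem_Iio.mp hj) (not_lt.mpr (hi0le j))
  have hconst : ∀ t : ℝ, ξ t i0 * Real.exp (-(c i0 t)) = ξ 0 i0 := by
    intro t
    have := is_const_of_deriv_eq_zero (f := fun t => ξ t i0 * Real.exp (-(c i0 t)))
      (fun x => ⟨_, (hgd i0 x).hasFDerivAt⟩)
      (fun x => by rw [(hgd i0 x).deriv, hIio0]; simp) t 0
    simpa [hc0 i0] using this
  have part1 : ∀ t : ℝ, ξ t i0 = ξ 0 i0 * Real.exp (c i0 t) := by
    intro t
    have h := hconst t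
    have he : Real.exp (-(c i0 t)) ≠ 0 := Real.exp_ne_zero _
    field_simp [Real.exp_neg] at h ⊢
    rw [← hconst t, mul_assoc, ← Real.exp_add]; simp
  refine ⟨part1, ?_⟩
  intro i hi t
  -- fundamental theorem of calculus for g i
  have hScont : Continuous fun s => (∑ j ∈ Finset.Iio i, A s i j * ξ s j) * Real.exp (-(c i s)) := by
    apply Continuous.mul
    · exact continuous_finset_sum _ fun j _ => (hcA i j).mul (hcξ j)
    · exact ((hccont i).neg).rexp
  have hInt : ∫ s in (0:ℝ)..t,
      (∑ j ∈ Finset.Iio i, A s i j * ξ s j) * Real.exp (-(c i s))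
      = ξ t i * Real.exp (-(c i t)) - ξ 0 i := by
    rw [intervalIntegral.integral_eq_sub_of_hasDerivAt (fun s _ => hgd i s)
      (hScont.intervalIntegrable _ _)]
    simp [hc0 i]
  -- rewrite the integrand of the goal
  have hpt : ∀ s : ℝ,
      (∑ j ∈ Finset.Iio i, A s i j * ξ s j / ξ s i0) * Real.exp (c i0 s - c i s)
        = (ξ 0 i0)⁻¹ * ((∑ j ∈ Finset.Iio i, A s i j * ξ s j) * Real.exp (-(c i s))) := by
    intro s
    have : ∀ j ∈ Finset.Iio i, A s i j * ξ s j / ξ s i0 = (A s i j * ξ s j) / ξ s i0 :=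
      fun j _ => rfl
    rw [Finset.sum_congr rfl this, ← Finset.sum_div, part1 s, Real.exp_sub, Real.exp_neg]
    have he0 : Real.exp (c i0 s) ≠ 0 := Real.exp_ne_zero _
    have hei : Real.exp (c i s) ≠ 0 := Real.exp_ne_zero _
    field_simp
  simp only [hpt]
  rw [intervalIntegral.integral_const_mul, hInt, part1 t, Real.exp_sub]
  have he0 : Real.exp (c i0 t) ≠ 0 := Real.exp_ne_zero _
  have hei : Real.exp (c i t) ≠ 0 := Real.exp_ne_zero _
  rw [Real.exp_neg]
  field_simp
  ring
end

section
/- Let a₁₁, a₂₁, a₂₂ : ℝ → ℝ be continuous, set c₁(t) = ∫₀ᵗ a₁₁(s) ds and c₂(t) = ∫₀ᵗ a₂₂(s) ds, and let ξ₁, ξ₂ : ℝ → ℝ be differentiable with ξ₁'(t) = a₁₁(t)·ξ₁(t), ξ₂'(t) = a₂₁(t)·ξ₁(t) + a₂₂(t)·ξ₂(t) for all t, and ξ₁(0) ≠ 0. Then for all t, ξ₂(t) = ξ₁(t)·exp(c₂(t) − c₁(t))·( ξ₂(0)/ξ₁(0) + ∫₀ᵗ a₂₁(s)·exp(c₁(s)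 − c₂(s)) ds ). -/
/-- Base step for the lower triangular case, solved by quadratures. -/
theorem stmt_8 (a₁₁ a₂₁ a₂₂ c₁ c₂ ξ₁ ξ₂ : ℝ → ℝ)
    (ha₁₁ : Continuous a₁₁) (ha₂₁ : Continuous a₂₁) (ha₂₂ : Continuous a₂₂)
    (hc₁ : ∀ t, c₁ t = ∫ s in (0:ℝ)..t, a₁₁ s)
    (hc₂ : ∀ t, c₂ t = ∫ s in (0:ℝ)..t, a₂₂ s)
    (hξ₁ : Differentiable ℝ ξ₁) (hξ₂ : Differentiable ℝ ξ₂)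
    (hode₁ : ∀ t, deriv ξ₁ t = a₁₁ t * ξ₁ t)
    (hode₂ : ∀ t, deriv ξ₂ t = a₂₁ t * ξ₁ t + a₂₂ t * ξ₂ t)
    (h0 : ξ₁ 0 ≠ 0) :
    ∀ t, ξ₂ t = ξ₁ t * Real.exp (c₂ t - c₁ t) *
      (ξ₂ 0 / ξ₁ 0 + ∫ s in (0:ℝ)..t, a₂₁ s * Real.exp (c₁ s - c₂ s)) := by
  have hce₁ : c₁ = fun u => ∫ s in (0:ℝ)..u, a₁₁ s := funext hc₁
  have hce₂ : c₂ = fun u => ∫ s in (0:ℝ)..u, a₂₂ s := funext hc₂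
  have hc₁d : ∀ t, HasDerivAt c₁ (a₁₁ t) t := by
    intro t; rw [hce₁]; exact (ha₁₁.integral_hasStrictDerivAt 0 t).hasDerivAt
  have hc₂d : ∀ t, HasDerivAt c₂ (a₂₂ t) t := by
    intro t; rw [hce₂]; exact (ha₂₂.integral_hasStrictDerivAt 0 t).hasDerivAt
  have hc₁0 : c₁ 0 = 0 := by simp [hc₁]
  have hc₂0 : c₂ 0 = 0 := by simp [hc₂]
  have hc₁c : Continuous c₁ := by
    exact Differentiable.continuous (fun t => (hc₁d t).differentiableAt)
  have hc₂c : Continuous c₂ := by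
    exact Differentiable.continuous (fun t => (hc₂d t).differentiableAt)
  -- ξ₁ t = ξ₁ 0 * exp (c₁ t)
  have hf : ∀ t, HasDerivAt (fun t => ξ₁ t * Real.exp (-c₁ t)) 0 t := by
    intro t
    have h1 : HasDerivAt ξ₁ (a₁₁ t * ξ₁ t) t := hode₁ t ▸ (hξ₁ t).hasDerivAt
    have h2 : HasDerivAt (fun t => Real.exp (-c₁ t))
        (Real.exp (-c₁ t) * (-a₁₁ t)) t := ((hc₁d t).neg).exp
    have := h1.mul h2
    exact this.congr_deriv (by ring)
  have hξ₁eq : ∀ t, ξ₁ t = ξ₁ 0 * Real.exp (c₁ t) := by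
    intro t
    have h' : ξ₁ t * Real.exp (-c₁ t) = ξ₁ 0 * Real.exp (-c₁ 0) :=
      is_const_of_deriv_eq_zero
        (fun x => (hf x).differentiableAt) (fun x => (hf x).deriv) t 0
    rw [hc₁0] at h'
    simp at h'
    have hne : Real.exp (-c₁ t) ≠ 0 := Real.exp_ne_zero _
    rw [Real.exp_neg] at h'
    field_simp at h'
    linarith
  -- h = ξ₂ * exp (-c₂)
  have hg : ∀ t, HasDerivAt (fun t => ξ₂ t * Real.exp (-c₂ t))
      (a₂₁ t * ξ₁ t * Real.exp (-c₂ t)) t := by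
    intro t
    have h1 : HasDerivAt ξ₂ (a₂₁ t * ξ₁ t + a₂₂ t * ξ₂ t) t :=
      hode₂ t ▸ (hξ₂ t).hasDerivAt
    have h2 : HasDerivAt (fun t => Real.exp (-c₂ t))
        (Real.exp (-c₂ t) * (-a₂₂ t)) t := ((hc₂d t).neg).exp
    have := h1.mul h2
    exact this.congr_deriv (by ring)
  intro t
  have hint : IntervalIntegrable (fun s => a₂₁ s * ξ₁ s * Real.exp (-c₂ s))
      MeasureTheory.volume 0 t :=
    ((ha₂₁.mul hξ₁.continuous).mul (hc₂c.neg.rexp)).intervalIntegrable 0 t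
  have hftc : (∫ s in (0:ℝ)..t, a₂₁ s * ξ₁ s * Real.exp (-c₂ s)) =
      ξ₂ t * Real.exp (-c₂ t) - ξ₂ 0 * Real.exp (-c₂ 0) :=
    intervalIntegral.integral_eq_sub_of_hasDerivAt
      (fun x _ => hg x) hint
  have hintcongr : (∫ s in (0:ℝ)..t, a₂₁ s * ξ₁ s * Real.exp (-c₂ s)) =
      ξ₁ 0 * ∫ s in (0:ℝ)..t, a₂₁ s * Real.exp (c₁ s - c₂ s) := by
    rw [← intervalIntegral.integral_const_mul]
    apply intervalIntegral.integral_congr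
    intro s _
    simp only [hξ₁eq s, Real.exp_sub, Real.exp_neg]
    field_simp
  rw [hintcongr, hc₂0] at hftc
  simp at hftc
  rw [hξ₁eq t]
  rw [Real.exp_neg] at hftc
  have he₂ : Real.exp (c₂ t) ≠ 0 := Real.exp_ne_zero _
  rw [Real.exp_sub]
  field_simp at hftc ⊢
  linear_combination (-1 : ℝ) * hftc
end

section
/- Let v₁, w₁, v₂, w₂, ψ : ℝ → ℝ be differentiable and u₁, u₂ : ℝ → ℝ, satisfying for all t: v₁' = u₁, w₁' = u₂, v₂' = u₁·cos ψ − u₂·sin ψ, w₂' = −(1/cos v₂)·(u₁·sin ψ + u₂·cos ψ), ψ' = tan(v₂)·(u₁·sin ψ + u₂·cos ψ), and suppose cos(ψ(t)/2) ≠ 0 and cos(v₂(t)/2) ≠ 0 for all t. Define σ(t) = tan(ψ(t)/2) and ξ(t) = tan(v₂(t)/2). Then for all t, ξ'(t) = ((1 + ξ(t)²)/(2·(1 + σ(t)²)))·( (1 − σ(t)²)·u₁(t) − 2·σ(t)·u₂(t) ). -/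
/-- Rationalized equation for ξ = tan(v₂/2) in the plate-ball system. -/
theorem stmt_11 (v₁ w₁ v₂ w₂ ψ u₁ u₂ : ℝ → ℝ)
    (hv₁ : Differentiable ℝ v₁) (hw₁ : Differentiable ℝ w₁)
    (hv₂ : Differentiable ℝ v₂) (hw₂ : Differentiable ℝ w₂)
    (hψ : Differentiable ℝ ψ)
    (hode₁ : ∀ t, deriv v₁ t = u₁ t)
    (hode₂ : ∀ t, deriv w₁ t = u₂ t)
    (hode₃ : ∀ t, deriv v₂ t = u₁ t * Real.cos (ψ t) - u₂ t * Real.sin (ψ t))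
    (hode₄ : ∀ t, deriv w₂ t
      = -(1 / Real.cos (v₂ t)) * (u₁ t * Real.sin (ψ t) + u₂ t * Real.cos (ψ t)))
    (hode₅ : ∀ t, deriv ψ t
      = Real.tan (v₂ t) * (u₁ t * Real.sin (ψ t) + u₂ t * Real.cos (ψ t)))
    (hψhalf : ∀ t, Real.cos (ψ t / 2) ≠ 0)
    (hv₂half : ∀ t, Real.cos (v₂ t / 2) ≠ 0)
    (σ ξ : ℝ → ℝ)
    (hσ : ∀ t, σ t = Real.tan (ψ t / 2))
    (hξ : ∀ t, ξ t = Real.tan (v₂ t / 2)) :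
    ∀ t, deriv ξ t
      = ((1 + (ξ t) ^ 2) / (2 * (1 + (σ t) ^ 2)))
          * ((1 - (σ t) ^ 2) * u₁ t - 2 * σ t * u₂ t) := by
  intro t
  have hξf : ξ = fun t => Real.tan (v₂ t / 2) := funext hξ
  -- derivative of ξ
  have h1 : HasDerivAt (fun s => v₂ s / 2) (deriv v₂ t / 2) t :=
    ((hv₂ t).hasDerivAt).div_const 2
  have h2 : HasDerivAt ξ (1 / Real.cos (v₂ t / 2) ^ 2 * (deriv v₂ t / 2)) t := by
    rw [hξf]
    exact (Real.hasDerivAt_tan (hv₂half t)).comp t h1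
  have hd : deriv ξ t = 1 / Real.cos (v₂ t / 2) ^ 2 * (deriv v₂ t / 2) := h2.deriv
  rw [hd, hode₃ t, hσ t, hξ t, Real.tan_eq_sin_div_cos, Real.tan_eq_sin_div_cos]
  have hc : Real.cos (ψ t) = 2 * Real.cos (ψ t / 2) ^ 2 - 1 := by
    have := Real.cos_two_mul (ψ t / 2)
    rw [← this]; ring_nf
  have hs : Real.sin (ψ t) = 2 * Real.sin (ψ t / 2) * Real.cos (ψ t / 2) := by
    have := Real.sin_two_mul (ψ t / 2)
    rw [← this]; ring_nf
  have hpy : Real.sin (ψ t / 2) ^ 2 + Real.cos (ψ t / 2) ^ 2 = 1 :=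
    Real.sin_sq_add_cos_sq _
  rw [hc, hs]
  have hψn := hψhalf t
  have hvn := hv₂half t
  field_simp
  linear_combination (2 * u₁ t * Real.cos (ψ t / 2) ^ 2 - 2 * Real.cos (ψ t / 2) * u₂ t * Real.sin (ψ t / 2)) * hpy + (-(u₁ t * Real.cos (ψ t / 2) ^ 2) + u₁ t * Real.sin (ψ t / 2) ^ 2 + 2 * Real.cos (ψ t / 2) * u₂ t * Real.sin (ψ t / 2)) * Real.sin_sq_add_cos_sq (v₂ t / 2)
end

section
/- Let v₁, w₁, v₂, w₂, ψ : ℝ → ℝ be differentiable and u₁, u₂ : ℝ → ℝ, satisfying for all t: v₁' = u₁, w₁' = u₂, v₂' = u₁·cos ψ − u₂·sin ψ, w₂' = −(1/cos v₂)·(u₁·sin ψ + u₂·cos ψ), ψ' = tan(v₂)·(u₁·sin ψ + u₂·cos ψ), and suppose cos(ψ(t)/2) ≠ 0, cos(v₂(t)/2) ≠ 0 and cos(v₂(t)) ≠ 0 for all t. Define σ(t) = tan(ψ(t)/2) and ξ(t) = tan(v₂(t)/2). Then for all t, σ'(t) = (ξ(t)/(1 − ξ(t)²))·( 2·σ(t)·u₁(t)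 + (1 − σ(t)²)·u₂(t) ). -/
/-- Rationalized equation for σ = tan(ψ/2) in the plate-ball system. -/
theorem stmt_12 (v₁ w₁ v₂ w₂ ψ u₁ u₂ : ℝ → ℝ)
    (hv₁ : Differentiable ℝ v₁) (hw₁ : Differentiable ℝ w₁)
    (hv₂ : Differentiable ℝ v₂) (hw₂ : Differentiable ℝ w₂)
    (hψ : Differentiable ℝ ψ)
    (hode₁ : ∀ t, deriv v₁ t = u₁ t)
    (hode₂ : ∀ t, deriv w₁ t = u₂ t)
    (hode₃ : ∀ t, deriv v₂ t = u₁ t * Real.cos (ψ t) - u₂ t * Real.sin (ψ t))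
    (hode₄ : ∀ t, deriv w₂ t
      = -(1 / Real.cos (v₂ t)) * (u₁ t * Real.sin (ψ t) + u₂ t * Real.cos (ψ t)))
    (hode₅ : ∀ t, deriv ψ t
      = Real.tan (v₂ t) * (u₁ t * Real.sin (ψ t) + u₂ t * Real.cos (ψ t)))
    (hψhalf : ∀ t, Real.cos (ψ t / 2) ≠ 0)
    (hv₂half : ∀ t, Real.cos (v₂ t / 2) ≠ 0)
    (hv₂cos : ∀ t, Real.cos (v₂ t) ≠ 0)
    (σ ξ : ℝ → ℝ)
    (hσ : ∀ t, σ t = Real.tan (ψ t / 2))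
    (hξ : ∀ t, ξ t = Real.tan (v₂ t / 2)) :
    ∀ t, deriv σ t
      = (ξ t / (1 - (ξ t) ^ 2))
          * (2 * σ t * u₁ t + (1 - (σ t) ^ 2) * u₂ t) := by
  intro t
  have hσf : σ = fun t => Real.tan (ψ t / 2) := funext hσ
  have h1 : HasDerivAt (fun t => ψ t / 2) (deriv ψ t / 2) t :=
    ((hψ t).hasDerivAt).div_const 2
  have h2 : HasDerivAt σ ((1 / Real.cos (ψ t / 2) ^ 2) * (deriv ψ t / 2)) t := by
    rw [hσf]
    exact (Real.hasDerivAt_tan (hψhalf t)).comp t h1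
  rw [h2.deriv, hode₅ t, hσ t, hξ t]
  set s1 := Real.sin (ψ t / 2)
  set c1 := Real.cos (ψ t / 2)
  set s2 := Real.sin (v₂ t / 2)
  set c2 := Real.cos (v₂ t / 2)
  have hc1 : c1 ≠ 0 := hψhalf t
  have hc2 : c2 ≠ 0 := hv₂half t
  have hsin : Real.sin (ψ t) = 2 * s1 * c1 := by
    rw [show ψ t = 2 * (ψ t / 2) by ring, Real.sin_two_mul]
  have hcos : Real.cos (ψ t) = c1 ^ 2 - s1 ^ 2 := by
    rw [show ψ t = 2 * (ψ t / 2) by ring, Real.cos_two_mul']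
  have hsin2 : Real.sin (v₂ t) = 2 * s2 * c2 := by
    rw [show v₂ t = 2 * (v₂ t / 2) by ring, Real.sin_two_mul]
  have hcos2 : Real.cos (v₂ t) = c2 ^ 2 - s2 ^ 2 := by
    rw [show v₂ t = 2 * (v₂ t / 2) by ring, Real.cos_two_mul']
  have hcv : c2 ^ 2 - s2 ^ 2 ≠ 0 := hcos2 ▸ hv₂cos t
  rw [Real.tan_eq_sin_div_cos (v₂ t), Real.tan_eq_sin_div_cos (ψ t / 2),
    Real.tan_eq_sin_div_cos (v₂ t / 2), hsin, hcos, hsin2, hcos2]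
  have e2 : (1 : ℝ) - (s2 / c2) ^ 2 = (c2 ^ 2 - s2 ^ 2) / c2 ^ 2 := by
    field_simp
  rw [e2]
  simp only [s1, c1, s2, c2] at hc1 hc2 hcv ⊢
  field_simp
end
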